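/- arXiv:1204.5463 — 2 statements merged into one kernel-verified Lean document; each statement's English description precedes it below -/
import Mathlib

section
/- Let A ∈ ℂ^{n×n}, let V_{m+1} ∈ ℂ^{n×(m+1)} have orthonormal columns v₁,…,v_{m+1}, let V_m consist of its first m columns, and let Ĥ_m ∈ ℂ^{(m+1)×m} satisfy A V_m = V_{m+1} Ĥ_m. Write Ĥ_m = [H_m; h_m^H] with H_m ∈ ℂ^{m×m} and h_m ∈ ℂ^m, assume H_m is invertible, and let f_m ∈ ℂ^m be the solution of H_m^H f_m = h_m. Then for λ ∈ ℂ and nonzero g ∈ ℂ^m, the pair (λ, V_m g) is a harmonic Ritz pair of A with respect to 𝒦 = range(V_m) if and only if (H_m + f_m h_m^H) g = λ g, i.e. (λ, g) is an eigenpair of the matrix H_m + f_m h_m^H. -/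
open Matrix

/-- A harmonic Ritz pair `(λ, v)` of `A` with respect to a subspace `𝒦`: `v ∈ 𝒦` is nonzero
and `Av - λv` is orthogonal to `A𝒦` (standard Hermitian inner product). -/
def IsHarmonicRitzPair {n : ℕ} (A : Matrix (Fin n) (Fin n) ℂ)
    (K : Submodule ℂ (EuclideanSpace ℂ (Fin n))) (lam : ℂ)
    (v : EuclideanSpace ℂ (Fin n)) : Prop :=
  v ∈ K ∧ v ≠ 0 ∧
    Matrix.toEuclideanLin A v - lam • v ∈ (K.map (Matrix.toEuclideanLin A))ᗮ

/-- With `A V_m = V_{m+1} Ĥ_m`, `Ĥ_m = [H_m; h_m^H]`, `H_m` invertible and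
`H_m^H f_m = h_m`, the pair `(λ, V_m g)` (with `g ≠ 0`) is a harmonic Ritz pair of `A`
w.r.t. `𝒦 = range V_m` iff `(H_m + f_m h_m^H) g = λ g`. -/
theorem harmonic_ritz_pair_iff_eigenpair {n m : ℕ}
    (A : Matrix (Fin n) (Fin n) ℂ)
    (V : Matrix (Fin n) (Fin (m + 1)) ℂ)
    (hV : V.conjTranspose * V = 1)
    (Hhat : Matrix (Fin (m + 1)) (Fin m) ℂ)
    (hArnoldi : A * V.submatrix id Fin.castSucc = V * Hhat)
    (Hm : Matrix (Fin m) (Fin m) ℂ)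
    (hHm : ∀ (i : Fin m) (j : Fin m), Hhat (Fin.castSucc i) j = Hm i j)
    (hm : Fin m → ℂ)
    (hhm : ∀ j : Fin m, Hhat (Fin.last m) j = star (hm j))
    (hinv : IsUnit Hm)
    (f : Fin m → ℂ) (hf : Hm.conjTranspose *ᵥ f = hm)
    (lam : ℂ) (g : EuclideanSpace ℂ (Fin m)) (hg : g ≠ 0) :
    IsHarmonicRitzPair A
        (LinearMap.range (Matrix.toEuclideanLin (V.submatrix id Fin.castSucc)))
        lam (Matrix.toEuclideanLin (V.submatrix id Fin.castSucc) g)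
      ↔ (Hm + Matrix.vecMulVec f (fun j => star (hm j))) *ᵥ g = lam • (g : Fin m → ℂ) := by
  classical
  set Vm := V.submatrix id Fin.castSucc with hVm_def
  -- orthonormality of Vm
  have hVmo : Vmᴴ * Vm = 1 := by
    ext i j
    have h1 := congrFun (congrFun hV (Fin.castSucc i)) (Fin.castSucc j)
    simp only [mul_apply, conjTranspose_apply, hVm_def, submatrix_apply, id] at h1 ⊢
    rw [h1]
    simp [one_apply, Fin.castSucc_inj]
  -- E = Vᴴ * Vm
  have hE : Vᴴ * Vm = Matrix.of fun i j => (1 : Matrix (Fin (m+1)) (Fin (m+1)) ℂ) i (Fin.castSucc j) := by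
    ext i j
    have h1 := congrFun (congrFun hV i) (Fin.castSucc j)
    simpa [mul_apply, hVm_def, conjTranspose_apply] using h1
  have hMVm : (A * Vm)ᴴ * Vm = Hmᴴ := by
    rw [hArnoldi, conjTranspose_mul, Matrix.mul_assoc, hE]
    ext i j
    simp only [mul_apply, conjTranspose_apply, one_apply, of_apply]
    rw [Finset.sum_eq_single (Fin.castSucc j)]
    · simp [hHm]
    · intro b _ hb; simp [hb]
    · simp
  have hMM : (A * Vm)ᴴ * (A * Vm) = Hmᴴ * Hm + vecMulVec hm (fun j => star (hm j)) := by
    rw [hArnoldi, conjTranspose_mul, Matrix.mul_assoc, ← Matrix.mul_assoc Vᴴ, hV,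
      Matrix.one_mul]
    ext i j
    simp only [mul_apply, conjTranspose_apply, Matrix.add_apply, vecMulVec_apply]
    rw [Fin.sum_univ_castSucc]
    simp [hHm, hhm]
  have hHmve : Hmᴴ * vecMulVec f (fun j => star (hm j)) = vecMulVec hm (fun j => star (hm j)) := by
    ext i j
    simp only [mul_apply, vecMulVec_apply]
    rw [Finset.sum_congr rfl (fun k _ => (mul_assoc _ _ _).symm), ← Finset.sum_mul]
    congr 1
    exact congrFun hf i
  have hinj : Function.Injective (Hmᴴ.mulVec) :=
    mulVec_injective_iff_isUnit.mpr ((isUnit_conjTranspose Hm).mpr hinv)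
  -- nonzero
  have hVmg : Matrix.toEuclideanLin Vm g ≠ 0 := by
    intro h
    apply hg
    have h0 : Vm *ᵥ (WithLp.equiv 2 _ g) = 0 := congrArg (WithLp.equiv 2 (Fin n → ℂ)) h
    have h1 : (Vmᴴ * Vm) *ᵥ (WithLp.equiv 2 _ g) = 0 := by
      rw [← mulVec_mulVec, h0, mulVec_zero]
    rw [hVmo, one_mulVec] at h1
    exact (WithLp.equiv 2 _).injective h1
  -- orthogonality characterization
  have hinner : ∀ (w : Fin m → ℂ) (x : EuclideanSpace ℂ (Fin n)),
      (inner ℂ (Matrix.toEuclideanLin A (Matrix.toEuclideanLin Vm ((WithLp.equiv 2 _).symm w))) x : ℂ)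
        = star w ⬝ᵥ ((A * Vm)ᴴ *ᵥ (WithLp.equiv 2 _ x)) := by
    intro w x
    have hu : Matrix.toEuclideanLin A (Matrix.toEuclideanLin Vm ((WithLp.equiv 2 _).symm w))
        = (WithLp.equiv 2 _).symm ((A * Vm) *ᵥ w) := by
      rw [WithLp.equiv_symm_apply, toEuclideanLin_apply_piLp_toLp, toEuclideanLin_apply_piLp_toLp,
        mulVec_mulVec]; rfl
    rw [hu, dotProduct_mulVec, ← star_mulVec, PiLp.inner_apply]
    simp only [RCLike.inner_apply, starRingEnd_apply]
    exact Finset.sum_congr rfl fun k _ => mul_comm _ _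
  have hOrth : ∀ x : EuclideanSpace ℂ (Fin n),
      (x ∈ ((LinearMap.range (Matrix.toEuclideanLin Vm)).map (Matrix.toEuclideanLin A))ᗮ
        ↔ (A * Vm)ᴴ *ᵥ (WithLp.equiv 2 _ x) = 0) := by
    intro x
    rw [Submodule.mem_orthogonal]
    constructor
    · intro h
      funext i
      have hs : star (Pi.single i 1 : Fin m → ℂ) = Pi.single i 1 := by
        funext k
        simp [Pi.single_apply, apply_ite (star : ℂ → ℂ)]
      have := h _ ⟨_, ⟨(WithLp.equiv 2 _).symm (Pi.single i 1), rfl⟩, rfl⟩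
      rw [hinner, hs, single_dotProduct, one_mul] at this
      exact this
    · intro h u hu
      obtain ⟨_, ⟨w, rfl⟩, rfl⟩ := hu
      have : Matrix.toEuclideanLin Vm w
          = Matrix.toEuclideanLin Vm ((WithLp.equiv 2 _).symm (WithLp.equiv 2 _ w)) := by simp
      rw [this, hinner, h, dotProduct_zero]
  -- main computation
  set g' : Fin m → ℂ := WithLp.equiv 2 _ g with hg'
  have hkey : (A * Vm)ᴴ *ᵥ (WithLp.equiv 2 _
        (Matrix.toEuclideanLin A (Matrix.toEuclideanLin Vm g) - lam • Matrix.toEuclideanLin Vm g))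
      = Hmᴴ *ᵥ ((Hm + vecMulVec f (fun j => star (hm j))) *ᵥ g' - lam • g') := by
    have hx : (WithLp.equiv 2 (Fin n → ℂ))
        (Matrix.toEuclideanLin A (Matrix.toEuclideanLin Vm g) - lam • Matrix.toEuclideanLin Vm g)
        = (A * Vm) *ᵥ g' - lam • (Vm *ᵥ g') := by
      simp [Matrix.toEuclideanLin_apply, mulVec_mulVec]; rfl
    rw [hx, mulVec_sub, mulVec_smul, mulVec_mulVec, mulVec_mulVec, hMM, hMVm]
    rw [mulVec_sub, mulVec_smul, mulVec_mulVec, Matrix.mul_add, add_mulVec, add_mulVec, hHmve]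
  -- conclude
  unfold IsHarmonicRitzPair
  constructor
  · rintro ⟨-, -, h3⟩
    rw [hOrth, hkey] at h3
    have := hinj (h3.trans (mulVec_zero _).symm)
    exact sub_eq_zero.mp this
  · intro heig
    refine ⟨⟨g, rfl⟩, hVmg, (hOrth _).mpr ?_⟩
    rw [hkey]
    have : (Hm + vecMulVec f (fun j => star (hm j))) *ᵥ g' - lam • g' = 0 :=
      sub_eq_zero.mpr heig
    rw [this, mulVec_zero]
end

section
/- Let A ∈ ℂ^{n×n}, let 𝒦 ⊆ ℂⁿ be a subspace and s ∈ ℂⁿ a vector such that A𝒦 ⊆ 𝒦 + span{s}. Let r ∈ ℂⁿ be a vector spanning the orthogonal complement of A𝒦 inside 𝒦 + span{s}, i.e. r is orthogonal to A𝒦 and A𝒦 ⊕ span{r} = 𝒦 + span{s}. Then for every harmonic Ritz pair (λ, u) of A with respect to 𝒦, the residual Au − λu lies in span{r}. -/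
open Matrix

/-- If `A𝒦 ⊆ 𝒦 + span{s}` and `r` spans the orthogonal complement of `A𝒦`
inside `𝒦 + span{s}` (i.e. `r ⊥ A𝒦` and `A𝒦 ⊕ span{r} = 𝒦 + span{s}`), then the residual
`Au - λu` of every harmonic Ritz pair `(λ, u)` of `A` w.r.t. `𝒦` lies in `span{r}`. -/
theorem harmonic_ritz_residual_mem_span {n : ℕ}
    (A : Matrix (Fin n) (Fin n) ℂ)
    (K : Submodule ℂ (EuclideanSpace ℂ (Fin n)))
    (s r : EuclideanSpace ℂ (Fin n))
    (h1 : K.map (Matrix.toEuclideanLin A) ≤ K ⊔ (ℂ ∙ s))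
    (h2 : r ∈ (K.map (Matrix.toEuclideanLin A))ᗮ)
    (h3 : K.map (Matrix.toEuclideanLin A) ⊔ (ℂ ∙ r) = K ⊔ (ℂ ∙ s))
    (lam : ℂ) (u : EuclideanSpace ℂ (Fin n))
    (hu : IsHarmonicRitzPair A K lam u) :
    Matrix.toEuclideanLin A u - lam • u ∈ (ℂ ∙ r) := by
  obtain ⟨huK, -, hw⟩ := hu
  set AK := K.map (Matrix.toEuclideanLin A) with hAK
  set w := Matrix.toEuclideanLin A u - lam • u with hwdef
  have hspan : (ℂ ∙ r) ≤ AKᗮ := by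
    rw [Submodule.span_singleton_le_iff_mem]; exact h2
  have hmem : w ∈ AK ⊔ (ℂ ∙ r) := by
    rw [h3]
    exact Submodule.sub_mem _ (h1 (Submodule.mem_map_of_mem huK))
      (Submodule.mem_sup_left (K.smul_mem lam huK))
  obtain ⟨a, ha, b, hb, hab⟩ := Submodule.mem_sup.mp hmem
  have ha' : a ∈ AKᗮ := by
    have : a = w - b := by rw [← hab]; abel
    rw [this]
    exact Submodule.sub_mem _ hw (hspan hb)
  have ha0 : a = 0 :=
    (Submodule.disjoint_def.mp AK.orthogonal_disjoint.symm) a ha' ha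
  rw [← hab, ha0, zero_add]
  exact hb
end
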